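/- arXiv:1011.6291 — 5 statements merged into one kernel-verified Lean document; each statement's English description precedes it below -/
import Mathlib

section
/- Let R be a commutative ring, n ≥ 2, and ω ∈ R with ω^{n-1} = 1. Then the function p(x₁,...,xₙ) = Σ_{i=1}^n ω^{i-1} x_i is associative. -/
/-- Substituting `f` applied to the window `x_i, ..., x_{i+n-1}` into slot `i`
of `f` applied to the remaining outer variables among `x_1, ..., x_{2n-1}`. -/
def nestAt {R : Type*} (n : ℕ) (f : (Fin n → R) → R) (i : Fin n)
    (x : Fin (2 * n - 1) → R) : R :=
  f (fun j =>
    if (j : ℕ) < (i : ℕ) then x ⟨j, by have := j.isLt; have := i.isLt; omega⟩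
    else if (j : ℕ) = (i : ℕ) then
      f (fun k => x ⟨(i : ℕ) + (k : ℕ), by have := k.isLt; have := i.isLt; omega⟩)
    else x ⟨(j : ℕ) + n - 1, by have := j.isLt; have := i.isLt; omega⟩)

/-- `f` is `n`-ary associative: all the bracketings coincide. -/
def IsNAssoc {R : Type*} (n : ℕ) (f : (Fin n → R) → R) : Prop :=
  ∀ i j : Fin n, ∀ x : Fin (2 * n - 1) → R, nestAt n f i x = nestAt n f j x


theorem stmt_3 {R : Type*} [CommRing R] (n : ℕ) (hn : 2 ≤ n) (ω : R)
    (hω : ω ^ (n - 1) = 1) :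
    IsNAssoc n (fun x : Fin n → R => ∑ i : Fin n, ω ^ i.val * x i) := by
  intro a b x
  set X : ℕ → R := fun m => if h : m < 2 * n - 1 then x ⟨m, h⟩ else 0 with hXdef
  have hx : ∀ (m : ℕ) (h : m < 2 * n - 1), x ⟨m, h⟩ = X m := by
    intro m h; simp [hXdef, h]
  have key : ∀ i : Fin n, nestAt n (fun y : Fin n → R => ∑ i : Fin n, ω ^ i.val * y i) i x
      = ∑ m ∈ Finset.range (2 * n - 1), ω ^ m * X m := by
    intro i
    have hi : (i : ℕ) < n := i.isLt
    set C : ℕ → R := fun j =>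
      if j < (i : ℕ) then X j
      else if j = (i : ℕ) then ∑ k ∈ Finset.range n, ω ^ k * X ((i : ℕ) + k)
      else X (j + n - 1) with hC
    trans ∑ j ∈ Finset.range n, ω ^ j * C j
    · unfold nestAt
      simp only
      rw [← Fin.sum_univ_eq_sum_range (fun j => ω ^ j * C j)]
      refine Finset.sum_congr rfl fun j _ => ?_
      simp only [hx, hC]
      rw [Fin.sum_univ_eq_sum_range (fun k => ω ^ k * X ((i : ℕ) + k))]
    · -- split both sides
      have hin : (i : ℕ) + n ≤ 2 * n - 1 := by omega
      rw [Finset.range_eq_Ico,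
        ← Finset.sum_Ico_consecutive (fun j => ω ^ j * C j) (Nat.zero_le (i : ℕ)) hi.le,
        Finset.sum_eq_sum_Ico_succ_bot hi, Finset.range_eq_Ico,
        ← Finset.sum_Ico_consecutive (fun m => ω ^ m * X m) (Nat.zero_le (i : ℕ))
          (le_trans (Nat.le_add_right _ _) hin),
        ← Finset.sum_Ico_consecutive (fun m => ω ^ m * X m) (Nat.le_add_right (i:ℕ) n) hin]
      have E1 : ∑ j ∈ Finset.Ico 0 (i : ℕ), ω ^ j * C j
          = ∑ m ∈ Finset.Ico 0 (i : ℕ), ω ^ m * X m := by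
        refine Finset.sum_congr rfl fun j hj => ?_
        rw [Finset.mem_Ico] at hj
        simp [hC, hj.2]
      have E2 : ω ^ (i : ℕ) * C (i : ℕ)
          = ∑ m ∈ Finset.Ico (i : ℕ) ((i : ℕ) + n), ω ^ m * X m := by
        rw [Finset.sum_Ico_eq_sum_range]
        simp only [Nat.add_sub_cancel_left, hC, lt_irrefl, if_false, ite_true, ite_false,
          eq_self_iff_true, if_true, Finset.mul_sum]
        refine Finset.sum_congr rfl fun k _ => ?_
        rw [← mul_assoc, ← pow_add]
      have E3 : ∑ j ∈ Finset.Ico ((i : ℕ) + 1) n, ω ^ j * C j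
          = ∑ m ∈ Finset.Ico ((i : ℕ) + n) (2 * n - 1), ω ^ m * X m := by
        rw [Finset.sum_Ico_eq_sum_range, Finset.sum_Ico_eq_sum_range]
        have hcard : n - ((i : ℕ) + 1) = 2 * n - 1 - ((i : ℕ) + n) := by omega
        rw [hcard]
        refine Finset.sum_congr rfl fun t ht => ?_
        rw [Finset.mem_range] at ht
        have h1 : ¬ ((i : ℕ) + 1 + t < (i : ℕ)) := by omega
        have h2 : ¬ ((i : ℕ) + 1 + t = (i : ℕ)) := by omega
        have h3 : (i : ℕ) + 1 + t + n - 1 = (i : ℕ) + n + t := by omega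
        simp only [hC, if_neg h1, if_neg h2, h3]
        congr 1
        calc ω ^ ((i : ℕ) + 1 + t) = ω ^ ((i : ℕ) + 1 + t) * ω ^ (n - 1) := by
              rw [hω, mul_one]
          _ = ω ^ ((i : ℕ) + 1 + t + (n - 1)) := by rw [← pow_add]
          _ = ω ^ ((i : ℕ) + n + t) := by congr 1; omega
      rw [E1, E2, E3]
  rw [key a, key b]
end

section
/- Let K be a field, n ≥ 2, a ∈ K with a ≠ 0, and b ∈ K. Then the function p_{a,b}(x₁,...,xₙ) = -b + a·∏_{i=1}^n (x_i + b) is associative. -/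
lemma key {M : Type*} [CommMonoid M] (G : ℕ → M) (a : M) (n i : ℕ) (hi : i < n) :
    ∏ j ∈ Finset.range n,
      (if j < i then G j else if j = i then a * ∏ k ∈ Finset.range n, G (i + k)
        else G (j + n - 1)) = a * ∏ m ∈ Finset.range (2 * n - 1), G m := by
  have h1 : i ≤ n := hi.le
  rw [Finset.range_eq_Ico, ← Finset.prod_Ico_consecutive _ (Nat.zero_le i) h1,
    Finset.prod_eq_prod_Ico_succ_bot hi]
  have e1 : ∏ j ∈ Finset.Ico 0 i, (if j < i then G j else if j = i then a * ∏ k ∈ Finset.range n, G (i + k) else G (j + n - 1)) = ∏ j ∈ Finset.Ico 0 i, G j := by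
    refine Finset.prod_congr rfl fun j hj => ?_
    rw [if_pos (Finset.mem_Ico.mp hj).2]
  have e2 : ∏ j ∈ Finset.Ico (i+1) n, (if j < i then G j else if j = i then a * ∏ k ∈ Finset.range n, G (i + k) else G (j + n - 1)) = ∏ m ∈ Finset.Ico (i+n) (2*n-1), G m := by
    rw [show (2*n-1) = n + (n-1) by omega, show i + n = (i+1) + (n-1) by omega,
      ← Finset.prod_Ico_add]
    refine Finset.prod_congr rfl fun j hj => ?_
    have hj' := Finset.mem_Ico.mp hj
    rw [if_neg (by omega), if_neg (by omega)]
    congr 1; omega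
  rw [Finset.range_eq_Ico] at e1 e2
  rw [e1, e2, if_neg (lt_irrefl i), if_pos rfl]
  have e3 : ∏ k ∈ Finset.range n, G (i + k) = ∏ m ∈ Finset.Ico i (i+n), G m := by
    rw [Finset.prod_Ico_eq_prod_range]; simp
  rw [Finset.range_eq_Ico] at e3
  rw [e3]
  have e4 : (∏ m ∈ Finset.Ico i (i+n), G m) * ∏ m ∈ Finset.Ico (i+n) (2*n-1), G m
      = ∏ m ∈ Finset.Ico i (2*n-1), G m := Finset.prod_Ico_consecutive _ (by omega) (by omega)
  rw [mul_assoc, e4, mul_left_comm, Finset.prod_Ico_consecutive _ (Nat.zero_le i) (by omega), ← Finset.range_eq_Ico]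


theorem stmt_4 {K : Type*} [Field K] (n : ℕ) (hn : 2 ≤ n) (a b : K) (ha : a ≠ 0) :
    IsNAssoc n (fun x : Fin n → K => -b + a * ∏ i, (x i + b)) := by
  intro i j x
  set G : ℕ → K := fun m => if h : m < 2 * n - 1 then x ⟨m, h⟩ + b else 1 with hG
  have main : ∀ i : Fin n,
      nestAt n (fun y : Fin n → K => -b + a * ∏ t, (y t + b)) i x
        = -b + a * (a * ∏ m ∈ Finset.range (2 * n - 1), G m) := by
    intro i
    have hi : (i : ℕ) < n := i.isLt
    show -b + a * (∏ t : Fin n, ((if (t : ℕ) < (i : ℕ) then x ⟨t, by omega⟩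
        else if (t : ℕ) = (i : ℕ) then
          -b + a * ∏ k : Fin n, (x ⟨(i : ℕ) + (k : ℕ), by have := k.isLt; omega⟩ + b)
        else x ⟨(t : ℕ) + n - 1, by have := t.isLt; omega⟩) + b))
      = -b + a * (a * ∏ m ∈ Finset.range (2 * n - 1), G m)
    congr 2
    have inner : ∏ k : Fin n, (x ⟨(i : ℕ) + (k : ℕ), by have := k.isLt; omega⟩ + b)
        = ∏ k ∈ Finset.range n, G ((i : ℕ) + k) := by
      rw [← Fin.prod_univ_eq_prod_range (fun k => G ((i : ℕ) + k)) n]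
      refine Finset.prod_congr rfl fun k _ => ?_
      rw [hG]
      simp only
      rw [dif_pos (by have := k.isLt; omega : (i : ℕ) + (k : ℕ) < 2 * n - 1)]
    have hSt : ∀ t : Fin n, ((if (t : ℕ) < (i : ℕ) then x ⟨t, by omega⟩
        else if (t : ℕ) = (i : ℕ) then
          -b + a * ∏ k : Fin n, (x ⟨(i : ℕ) + (k : ℕ), by have := k.isLt; omega⟩ + b)
        else x ⟨(t : ℕ) + n - 1, by have := t.isLt; omega⟩) + b)
        = (if (t : ℕ) < (i : ℕ) then G t
          else if (t : ℕ) = (i : ℕ) then a * ∏ k ∈ Finset.range n, G ((i : ℕ) + k)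
          else G ((t : ℕ) + n - 1)) := by
      intro t
      by_cases h1 : (t : ℕ) < (i : ℕ)
      · rw [if_pos h1, if_pos h1, hG]
        simp only
        rw [dif_pos (by omega : (t : ℕ) < 2 * n - 1)]
      · rw [if_neg h1, if_neg h1]
        by_cases h2 : (t : ℕ) = (i : ℕ)
        · rw [if_pos h2, if_pos h2, inner]; ring
        · rw [if_neg h2, if_neg h2, hG]
          simp only
          rw [dif_pos (by have := t.isLt; omega : (t : ℕ) + n - 1 < 2 * n - 1)]
    calc (∏ t : Fin n, ((if (t : ℕ) < (i : ℕ) then x ⟨t, by omega⟩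
        else if (t : ℕ) = (i : ℕ) then
          -b + a * ∏ k : Fin n, (x ⟨(i : ℕ) + (k : ℕ), by have := k.isLt; omega⟩ + b)
        else x ⟨(t : ℕ) + n - 1, by have := t.isLt; omega⟩) + b))
        = ∏ t : Fin n, (if ((t : ℕ)) < (i : ℕ) then G t
            else if (t : ℕ) = (i : ℕ) then a * ∏ k ∈ Finset.range n, G ((i : ℕ) + k)
            else G ((t : ℕ) + n - 1)) := Finset.prod_congr rfl fun t _ => hSt t
      _ = ∏ m ∈ Finset.range n, (if m < (i : ℕ) then G m
            else if m = (i : ℕ) then a * ∏ k ∈ Finset.range n, G ((i : ℕ) + k)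
            else G (m + n - 1)) := Fin.prod_univ_eq_prod_range (fun m =>
              if m < (i : ℕ) then G m
              else if m = (i : ℕ) then a * ∏ k ∈ Finset.range n, G ((i : ℕ) + k)
              else G (m + n - 1)) n
      _ = a * ∏ m ∈ Finset.range (2 * n - 1), G m := key G a n i hi
  rw [main i, main j]
end

section
/- Let R be an infinite integral domain, n ≥ 2, and let p : Rⁿ → R be an associative polynomial function. If the degree of p in the last variable xₙ is 0, then p is either a constant function or the projection onto the first coordinate. -/
theorem stmt_7 {R : Type*} [CommRing R] [IsDomain R] [Infinite R]
    (n : ℕ) (hn : 2 ≤ n) (p : MvPolynomial (Fin n) R)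
    (hassoc : IsNAssoc n (fun x : Fin n → R => MvPolynomial.eval x p))
    (hdeg : p.degreeOf ⟨n - 1, by omega⟩ = 0) :
    (∃ c : R, ∀ x : Fin n → R, MvPolynomial.eval x p = c) ∨
      (∀ x : Fin n → R, MvPolynomial.eval x p = x ⟨0, by omega⟩) := by
  classical
  have h0n : 0 < n := by omega
  have h1n : n - 1 < n := by omega
  -- Step A: the evaluation does not depend on the last coordinate.
  have hA : ∀ x y : Fin n → R, (∀ j : Fin n, (j : ℕ) ≠ n - 1 → x j = y j) →
      MvPolynomial.eval x p = MvPolynomial.eval y p := by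
    intro x y hxy
    have hdlt : p.degreeOf ⟨n - 1, h1n⟩ < 1 := lt_of_eq_of_lt hdeg Nat.zero_lt_one
    have hsupp : ∀ d ∈ p.support, d ⟨n - 1, h1n⟩ = 0 := by
      intro d hd
      have := (MvPolynomial.degreeOf_lt_iff Nat.zero_lt_one).mp hdlt d hd
      omega
    rw [MvPolynomial.eval_eq', MvPolynomial.eval_eq']
    refine Finset.sum_congr rfl fun d hd => ?_
    congr 1
    refine Finset.prod_congr rfl fun i _ => ?_
    by_cases hi : (i : ℕ) = n - 1
    · have hie : i = ⟨n - 1, h1n⟩ := Fin.ext hi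
      rw [hie, hsupp d hd, pow_zero, pow_zero]
    · rw [hxy i hi]
  -- Step B: the key associativity identity  f(f a, b₁, …, b_{n-1}) = f a.
  have hstar : ∀ (a : Fin n → R) (b : Fin (n - 1) → R),
      MvPolynomial.eval (fun j : Fin n => if h : (j : ℕ) = 0 then MvPolynomial.eval a p
        else b ⟨(j : ℕ) - 1, by have := j.isLt; omega⟩) p = MvPolynomial.eval a p := by
    intro a b
    set X : Fin (2 * n - 1) → R := fun j =>
      if h : (j : ℕ) < n then a ⟨j, h⟩
      else b ⟨(j : ℕ) - n, by have := j.isLt; omega⟩ with hX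
    have key := hassoc ⟨0, h0n⟩ ⟨n - 1, h1n⟩ X
    have hL : nestAt n (fun x : Fin n → R => MvPolynomial.eval x p) ⟨0, h0n⟩ X
        = MvPolynomial.eval (fun j : Fin n => if h : (j : ℕ) = 0 then MvPolynomial.eval a p
          else b ⟨(j : ℕ) - 1, by have := j.isLt; omega⟩) p := by
      show MvPolynomial.eval _ p = _
      refine congrArg (fun y : Fin n → R => MvPolynomial.eval y p) (funext fun j => ?_)
      simp only [Fin.val_mk]
      by_cases h0 : (j : ℕ) = 0
      · rw [if_neg (Nat.not_lt_zero _), if_pos h0, dif_pos h0]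
        show MvPolynomial.eval _ p = _
        refine congrArg (fun y : Fin n → R => MvPolynomial.eval y p) (funext fun k => ?_)
        simp only [hX, Fin.val_mk]
        rw [dif_pos (show 0 + (k : ℕ) < n by have := k.isLt; omega)]
        exact congrArg a (Fin.ext (Nat.zero_add _))
      · rw [if_neg (show ¬((j : ℕ) < 0) from Nat.not_lt_zero _), if_neg h0, dif_neg h0]
        simp only [hX, Fin.val_mk]
        rw [dif_neg (show ¬((j : ℕ) + n - 1 < n) by have := j.isLt; omega)]
        exact congrArg b (Fin.ext (show (j : ℕ) + n - 1 - n = (j : ℕ) - 1 by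
          have := j.isLt; omega))
    have hR : nestAt n (fun x : Fin n → R => MvPolynomial.eval x p) ⟨n - 1, h1n⟩ X
        = MvPolynomial.eval a p := by
      show MvPolynomial.eval _ p = _
      apply hA
      intro j hj
      simp only [Fin.val_mk]
      rw [if_pos (show (j : ℕ) < n - 1 by have := j.isLt; omega)]
      simp only [hX, Fin.val_mk]
      rw [dif_pos (show (j : ℕ) < n from j.isLt)]
    rw [hL, hR] at key
    exact key
  -- evaluation along a family of one-variable polynomials
  have hcomp : ∀ (g : Fin n → Polynomial R) (t : R),
      Polynomial.eval t (MvPolynomial.eval₂ Polynomial.C g p)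
        = MvPolynomial.eval (fun i => Polynomial.eval t (g i)) p := by
    intro g t
    rw [show Polynomial.eval t (MvPolynomial.eval₂ Polynomial.C g p)
        = (Polynomial.evalRingHom t) (MvPolynomial.eval₂ Polynomial.C g p) from rfl,
      MvPolynomial.eval₂_comp_left]
    have hid : (Polynomial.evalRingHom t).comp (Polynomial.C : R →+* Polynomial R)
        = RingHom.id R := by
      ext r; simp
    rw [hid, MvPolynomial.eval₂_id]
    rfl
  rcases Classical.em (∃ c : R, ∀ x : Fin n → R, MvPolynomial.eval x p = c) with hc | hc
  · exact Or.inl hc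
  right
  push_neg at hc
  obtain ⟨u, hu⟩ := hc (MvPolynomial.eval (fun _ : Fin n => (0 : R)) p)
  -- the range of the evaluation map is infinite
  set q : Polynomial R := MvPolynomial.eval₂ Polynomial.C
    (fun i => Polynomial.C (u i) * Polynomial.X) p with hq
  have hqeval : ∀ t : R, q.eval t = MvPolynomial.eval (fun i => u i * t) p := by
    intro t
    rw [hq, hcomp]
    simp
  have hq0 : q.eval 0 = MvPolynomial.eval (fun _ : Fin n => (0 : R)) p := by
    rw [hqeval]
    exact congrArg (fun y : Fin n → R => MvPolynomial.eval y p) (funext fun i => by ring)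
  have hq1 : q.eval 1 = MvPolynomial.eval u p := by
    rw [hqeval]
    exact congrArg (fun y : Fin n → R => MvPolynomial.eval y p) (funext fun i => by ring)
  have hqnc : ∀ c : R, q ≠ Polynomial.C c := by
    intro c hcc
    apply hu
    rw [← hq1, ← hq0, hcc, Polynomial.eval_C, Polynomial.eval_C]
  have hfib : ∀ c : R, {t : R | q.eval t = c}.Finite := by
    intro c
    rw [← Set.not_infinite]
    intro hinf
    apply hqnc c
    have hz : q - Polynomial.C c = 0 := by
      apply Polynomial.eq_zero_of_infinite_isRoot
      convert hinf using 1
      ext t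
      simp [Polynomial.IsRoot, sub_eq_zero]
    exact sub_eq_zero.mp hz
  have hrange : (Set.range (fun x : Fin n → R => MvPolynomial.eval x p)).Infinite := by
    have hsub : Set.range (fun t : R => q.eval t)
        ⊆ Set.range (fun x : Fin n → R => MvPolynomial.eval x p) := by
      rintro _ ⟨t, rfl⟩
      exact ⟨_, (hqeval t).symm⟩
    refine Set.Infinite.mono hsub ?_
    intro hfin
    have hcover : (Set.univ : Set R)
        ⊆ ⋃ c ∈ Set.range (fun t : R => q.eval t), {t : R | q.eval t = c} := by
      intro t _
      simp only [Set.mem_iUnion, Set.mem_setOf_eq]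
      exact ⟨q.eval t, ⟨t, rfl⟩, rfl⟩
    exact Set.infinite_univ (Set.Finite.subset (hfin.biUnion fun c _ => hfib c) hcover)
  -- the one-variable polynomial obtained by substituting t in the first slot is X
  have hQ : ∀ (b : Fin (n - 1) → R) (t : R),
      MvPolynomial.eval (fun j : Fin n => if h : (j : ℕ) = 0 then t
        else b ⟨(j : ℕ) - 1, by have := j.isLt; omega⟩) p = t := by
    intro b t
    set Qb : Polynomial R := MvPolynomial.eval₂ Polynomial.C
      (fun i : Fin n => if h : (i : ℕ) = 0 then Polynomial.X
        else Polynomial.C (b ⟨(i : ℕ) - 1, by have := i.isLt; omega⟩)) p with hQb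
    have hQev : ∀ s : R, Qb.eval s = MvPolynomial.eval (fun j : Fin n =>
        if h : (j : ℕ) = 0 then s else b ⟨(j : ℕ) - 1, by have := j.isLt; omega⟩) p := by
      intro s
      rw [hQb, hcomp]
      refine congrArg (fun y : Fin n → R => MvPolynomial.eval y p) (funext fun i => ?_)
      by_cases h : (i : ℕ) = 0 <;> simp [h]
    have hzero : Qb - Polynomial.X = 0 := by
      apply Polynomial.eq_zero_of_infinite_isRoot
      refine Set.Infinite.mono ?_ hrange
      rintro _ ⟨a, rfl⟩
      simp only [Set.mem_setOf_eq, Polynomial.IsRoot, Polynomial.eval_sub, Polynomial.eval_X,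
        sub_eq_zero]
      rw [hQev]
      exact hstar a b
    have hQX : Qb = Polynomial.X := sub_eq_zero.mp hzero
    rw [← hQev, hQX, Polynomial.eval_X]
  intro x
  have hxeq : x = (fun j : Fin n => if h : (j : ℕ) = 0 then x ⟨0, h0n⟩
      else (fun k : Fin (n - 1) => x ⟨(k : ℕ) + 1, by have := k.isLt; omega⟩)
        ⟨(j : ℕ) - 1, by have := j.isLt; omega⟩) := by
    funext j
    by_cases h : (j : ℕ) = 0
    · rw [dif_pos h]
      exact congrArg x (Fin.ext h)
    · rw [dif_neg h]
      exact congrArg x (Fin.ext (by simp; omega))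
  exact (congrArg (fun y : Fin n → R => MvPolynomial.eval y p) hxeq).trans
    (hQ (fun k : Fin (n - 1) => x ⟨(k : ℕ) + 1, by have := k.isLt; omega⟩) (x ⟨0, h0n⟩))
end

section
/- Let R be an infinite integral domain, n ≥ 2, and let p : Rⁿ → R be an associative polynomial function. If the degree of p in the first variable x₁ is 0, then p is either a constant function or the projection onto the last coordinate. -/
set_option maxHeartbeats 1000000


theorem stmt_8 {R : Type*} [CommRing R] [IsDomain R] [Infinite R]
    (n : ℕ) (hn : 2 ≤ n) (p : MvPolynomial (Fin n) R)
    (hassoc : IsNAssoc n (fun x : Fin n → R => MvPolynomial.eval x p))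
    (hdeg : p.degreeOf ⟨0, by omega⟩ = 0) :
    (∃ c : R, ∀ x : Fin n → R, MvPolynomial.eval x p = c) ∨
      (∀ x : Fin n → R, MvPolynomial.eval x p = x ⟨n - 1, by omega⟩) := by
  classical
  have hdeg' : p.degreeOf ⟨0, Nat.lt_of_lt_of_le Nat.zero_lt_two hn⟩ = 0 := hdeg
  clear hdeg
  set f : (Fin n → R) → R := fun x => MvPolynomial.eval x p with hf
  -- every monomial of p has exponent 0 in variable 0
  have hsupp : ∀ m ∈ p.support, m ⟨0, by omega⟩ = 0 := by
    intro m hm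
    have h1 : p.degreeOf ⟨0, by omega⟩ < 1 :=
      lt_of_le_of_lt (le_of_eq hdeg') Nat.zero_lt_one
    rw [MvPolynomial.degreeOf_lt_iff (by norm_num)] at h1
    have := h1 m hm; omega
  have indep0 : ∀ x y : Fin n → R, (∀ j : Fin n, (j : ℕ) ≠ 0 → x j = y j) → f x = f y := by
    intro x y h
    simp only [hf, MvPolynomial.eval_eq']
    apply Finset.sum_congr rfl
    intro m hm
    congr 1
    apply Finset.prod_congr rfl
    intro j _
    by_cases hj : (j : ℕ) = 0
    · have : j = ⟨0, by omega⟩ := Fin.ext hj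
      rw [this, hsupp m hm]
      simp
    · rw [h j hj]
  have E1 : ∀ a b : Fin n → R,
      f (fun j => if (j : ℕ) = n - 1 then f b else a j) = f b := by
    intro a b
    set x : Fin (2 * n - 1) → R := fun j =>
      if h : (j : ℕ) < n - 1 then a ⟨j, by omega⟩
      else b ⟨(j : ℕ) - (n - 1), by have := j.isLt; omega⟩ with hxdef
    have hx := hassoc ⟨n - 1, by omega⟩ ⟨0, by omega⟩ x
    refine Eq.trans ?_ (Eq.trans hx ?_)
    · unfold nestAt
      refine congrArg f ?_
      funext j
      simp only [hxdef, Fin.val_mk]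
      rcases Nat.lt_trichotomy (j : ℕ) (n - 1) with hj | hj | hj
      · rw [if_neg (show ¬ (j : ℕ) = n - 1 by omega), if_pos hj, dif_pos hj]
      · rw [if_pos hj, if_neg (show ¬ (j : ℕ) < n - 1 by omega), if_pos hj]
        refine congrArg f ?_
        funext k
        rw [dif_neg (show ¬ n - 1 + (k : ℕ) < n - 1 by omega)]
        refine congrArg b (Fin.ext ?_)
        simp only [Fin.val_mk]
        omega
      · exact absurd j.isLt (by omega)
    · unfold nestAt
      apply indep0
      intro j hj
      simp only [hxdef, Fin.val_mk]
      rw [if_neg (show ¬ (j : ℕ) < 0 by omega), if_neg hj,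
        dif_neg (show ¬ (j : ℕ) + n - 1 < n - 1 by omega)]
      refine congrArg b (Fin.ext ?_)
      simp only [Fin.val_mk]
      have := j.isLt
      omega
  -- univariate specialization in the last variable
  set P : (Fin n → R) → Polynomial R := fun a =>
    MvPolynomial.eval₂ Polynomial.C
      (fun j : Fin n => if (j : ℕ) = n - 1 then Polynomial.X else Polynomial.C (a j)) p
    with hP
  have hPeval : ∀ (a : Fin n → R) (t : R),
      (P a).eval t = f (fun j => if (j : ℕ) = n - 1 then t else a j) := by
    intro a t
    have h := MvPolynomial.eval₂_comp_left (Polynomial.evalRingHom t) Polynomial.C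
      (fun j : Fin n => if (j : ℕ) = n - 1 then Polynomial.X else Polynomial.C (a j)) p
    simp only [Polynomial.coe_evalRingHom] at h
    show Polynomial.eval t (MvPolynomial.eval₂ Polynomial.C
      (fun j : Fin n => if (j : ℕ) = n - 1 then Polynomial.X else Polynomial.C (a j)) p) = _
    rw [h]
    have hc : (Polynomial.evalRingHom t).comp Polynomial.C = RingHom.id R := by
      ext r; simp
    rw [hc, MvPolynomial.eval₂_id]
    show _ = MvPolynomial.eval (fun j : Fin n => if (j : ℕ) = n - 1 then t else a j) p
    refine congrArg (fun v : Fin n → R => MvPolynomial.eval v p) ?_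
    funext j
    by_cases hj : (j : ℕ) = n - 1 <;> simp [hj]
  have finimage : ∀ S : Finset R, (∀ x, f x ∈ S) → ∃ c, ∀ x, f x = c := by
    intro S hmem
    have hzero : (∏ c ∈ S, (p - MvPolynomial.C c)) = 0 := by
      apply MvPolynomial.funext
      intro x
      rw [map_prod, map_zero]
      apply Finset.prod_eq_zero (hmem x)
      simp [hf]
    rcases Finset.prod_eq_zero_iff.mp hzero with ⟨c, _, hpc⟩
    have hpC : p = MvPolynomial.C c := sub_eq_zero.mp hpc
    exact ⟨c, fun x => by simp [hf, hpC]⟩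
  by_cases hX : ∀ a : Fin n → R, P a = Polynomial.X
  · right
    intro x
    have h1 := hPeval x (x ⟨n - 1, by omega⟩)
    rw [hX x, Polynomial.eval_X] at h1
    have h2 : (fun j : Fin n => if (j : ℕ) = n - 1 then x ⟨n - 1, by omega⟩ else x j) = x := by
      funext j
      by_cases hj : (j : ℕ) = n - 1
      · rw [if_pos hj]
        exact congrArg x (Fin.ext (by simp [hj]))
      · rw [if_neg hj]
    rw [h2] at h1
    exact h1.symm
  · left
    push_neg at hX
    obtain ⟨a, ha⟩ := hX
    have hq : P a - Polynomial.X ≠ 0 := sub_ne_zero.mpr ha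
    refine finimage (P a - Polynomial.X).roots.toFinset ?_
    intro x
    rw [Multiset.mem_toFinset, Polynomial.mem_roots hq]
    show Polynomial.eval (f x) (P a - Polynomial.X) = 0
    rw [Polynomial.eval_sub, Polynomial.eval_X, hPeval, E1 a x, sub_self]
end

section
/- Let R be a commutative ring with ω ∈ R, ω ≠ 1, ω^{n-1} = 1, n ≥ 3, and let p(x₁,...,xₙ) = Σ ω^{i-1} x_i. Then there is no binary associative operation ∘ on R such that p(x₁,...,xₙ) = x₁ ∘ x₂ ∘ ⋯ ∘ xₙ for all x₁,...,xₙ ∈ R; i.e., the n-ary semigroup (R,p) is irreducible, provided R is an infinite integral domain. -/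
private lemma my_foldl_assoc {R : Type*} (op : R → R → R)
    (h : ∀ x y z, op (op x y) z = op x (op y z)) :
    ∀ (l : List R) (a b : R), l.foldl op (op a b) = op a (l.foldl op b)
  | [], _, _ => rfl
  | c :: l, a, b => by
      rw [List.foldl_cons, List.foldl_cons, h, my_foldl_assoc op h l]

theorem stmt_18 {R : Type*} [CommRing R] [IsDomain R] [Infinite R]
    (n : ℕ) (hn : 3 ≤ n) (ω : R) (hω1 : ω ≠ 1) (hω : ω ^ (n - 1) = 1) :
    ¬ ∃ op : R → R → R,
        (∀ x y z : R, op (op x y) z = op x (op y z)) ∧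
        ∀ x : Fin n → R,
          ∑ i : Fin n, ω ^ i.val * x i =
            (List.ofFn x).tail.foldl op (x ⟨0, by omega⟩) := by
  rintro ⟨op, hA, hp⟩
  obtain ⟨m, rfl⟩ : ∃ m, n = m + 2 := ⟨n - 2, by omega⟩
  have hω' : ω ^ (m + 1) = 1 := by simpa using hω
  have hp' : ∀ x : Fin (m + 2) → R,
      ∑ i : Fin (m + 2), ω ^ i.val * x i = (List.ofFn x).tail.foldl op (x 0) := by
    intro x
    rw [hp x]
    congr 1
  clear hp
  set e : R := (List.replicate m (0 : R)).foldl op 0 with he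
  -- right identity
  have hrid : ∀ a : R, op a e = a := by
    intro a
    have h1 := hp' (fun i => if i = 0 then a else 0)
    simp only [List.ofFn_succ, Fin.succ_ne_zero, if_false, List.ofFn_const,
      List.tail_cons, if_pos rfl, List.replicate_succ, List.foldl_cons] at h1
    rw [my_foldl_assoc op hA, ← he] at h1
    simp only [mul_ite, mul_zero, Finset.sum_ite_eq', Finset.mem_univ, if_true,
      Fin.val_zero, pow_zero, one_mul] at h1
    exact h1.symm
  -- fold over replicate of e is identity
  have hfe : ∀ (k : ℕ) (y : R), (List.replicate k e).foldl op y = y := by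
    intro k
    induction k with
    | zero => intro y; rfl
    | succ k ih =>
        intro y
        rw [List.replicate_succ, List.foldl_cons, hrid, ih]
  -- left identity
  have hlid : ∀ a : R, op e a = a := by
    intro a
    have hflist : (List.ofFn (fun i : Fin (m + 2) => if i = Fin.last (m + 1) then a else (0 : R)))
        = (0 :: List.replicate m 0).concat a := by
      rw [List.ofFn_succ']
      congr 1
      · have hc : (fun i : Fin (m + 1) =>
            if (Fin.castSucc i) = Fin.last (m + 1) then a else (0 : R)) = fun _ => 0 :=
          funext fun i => if_neg (Fin.castSucc_lt_last i).ne
        rw [hc, List.ofFn_const, List.replicate_succ]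
      · exact if_pos rfl
    have h1 := hp' (fun i => if i = Fin.last (m + 1) then a else 0)
    rw [hflist] at h1
    have h0ne : (0 : Fin (m + 2)) ≠ Fin.last (m + 1) := by
      simp [Fin.ext_iff]
    rw [List.concat_eq_append, List.cons_append, List.tail_cons, List.foldl_concat,
      if_neg h0ne, ← he] at h1
    have hs : ∑ i : Fin (m + 2), ω ^ i.val * (if i = Fin.last (m + 1) then a else 0) = a := by
      simp only [mul_ite, mul_zero, Finset.sum_ite_eq', Finset.mem_univ, if_true]
      rw [show (Fin.last (m + 1)).val = m + 1 from rfl, hω', one_mul]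
    rw [hs] at h1
    exact h1.symm
  -- formula for op
  have h10 : (1 : Fin (m + 2)) ≠ 0 := by simp [Fin.ext_iff]
  have hop : ∀ a b : R, op a b = op 0 0 + (a + ω * b) := by
    have key : ∀ a b : R,
        ∑ i : Fin (m + 2), ω ^ i.val * (if i = 0 then a else if i = 1 then b else e)
          = op a b := by
      intro a b
      have hflist : (List.ofFn (fun i : Fin (m + 2) =>
          if i = 0 then a else if i = 1 then b else e)) = a :: b :: List.replicate m e := by
        have hc : (fun i : Fin m =>
            if (i.succ.succ : Fin (m + 2)) = 0 then a
            else if i.succ.succ = 1 then b else e) = fun _ => e := by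
          funext i
          rw [if_neg (Fin.succ_ne_zero _), if_neg]
          rw [← Fin.succ_zero_eq_one]
          exact fun h => Fin.succ_ne_zero _ (Fin.succ_injective _ h)
        simp only [List.ofFn_succ]
        rw [hc, List.ofFn_const]
        simp [Fin.succ_ne_zero, Fin.succ_zero_eq_one]
      have h1 := hp' (fun i => if i = 0 then a else if i = 1 then b else e)
      rw [hflist, List.tail_cons, List.foldl_cons, hfe, if_pos rfl] at h1
      exact h1
    intro a b
    have ha := key a b
    have h0 := key 0 0
    rw [← ha, ← h0]
    have hpt : ∀ i : Fin (m + 2),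
        ω ^ i.val * (if i = 0 then a else if i = 1 then b else e)
          = ω ^ i.val * (if i = 0 then (0 : R) else if i = 1 then 0 else e)
            + ((if i = 0 then a else 0) + (if i = 1 then ω ^ i.val * b else 0)) := by
      intro i
      rcases eq_or_ne i 0 with rfl | hi0
      · simp [h10.symm]
      rcases eq_or_ne i 1 with rfl | hi1
      · rw [if_neg h10, if_neg h10, if_neg hi0, if_pos rfl, if_pos rfl, if_pos rfl]
        ring
      · rw [if_neg hi0, if_neg hi1, if_neg hi0, if_neg hi1, if_neg hi0, if_neg hi1]
        ring
    rw [Finset.sum_congr rfl (fun i _ => hpt i), Finset.sum_add_distrib,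
      Finset.sum_add_distrib, Finset.sum_ite_eq', Finset.sum_ite_eq']
    simp [Fin.val_one]
    try ring
  -- derive contradiction
  set K : R := op 0 0 with hK
  have h1 : K = ω * K := by
    have h := hA 0 0 0
    simp only [hop] at h
    linear_combination h
  have h2 : ω = ω * ω := by
    have h := hA 0 0 1
    simp only [hop] at h
    linear_combination h - h1
  have hne0 : ω ≠ 0 := by
    intro h
    rw [h, zero_pow (by omega : m + 1 ≠ 0)] at hω'
    exact zero_ne_one hω'
  apply hω1
  have : ω * 1 = ω * ω := by rw [mul_one]; exact h2
  exact (mul_left_cancel₀ hne0 this).symm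
end
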